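/- Let ω : [0,∞) → [0,∞) be increasing, let K > 1, r ∈ (0,1), C > 0, and suppose ∫₁^∞ ω(tu)/u^{1+r} du ≤ C·(σ(t)+1) for all t > 0. Then for all t > 0 and all integers j ≥ 0, ω(Kʲ t)/K^{rj} ≤ C·(K^{1+r}/(K−1))·(σ(t)+1). In particular, setting H := K^r, there is a constant C' such that ω(Kʲ t) ≤ C'·Hʲ·(σ(t)+1) for all t > 0 and j ≥ 1. -/

import Mathlib

open MeasureTheory Set

theorem stmt2 (ω σ : ℝ → ℝ) (hmono : MonotoneOn ω (Ici 0))
    (hpos : ∀ t ≥ (0:ℝ), 0 ≤ ω t)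
    (K r C : ℝ) (hK : 1 < K) (hr0 : 0 < r) (hr1 : r < 1) (hC : 0 < C)
    (hint : ∀ t > (0:ℝ), IntegrableOn (fun u => ω (t * u) / u ^ (1 + r)) (Ioi 1))
    (hbd : ∀ t > (0:ℝ), ∫ u in Ioi (1:ℝ), ω (t * u) / u ^ (1 + r) ≤ C * (σ t + 1)) :
    (∀ t > (0:ℝ), ∀ j : ℕ,
        ω (K ^ j * t) / K ^ (r * j) ≤ C * (K ^ (1 + r) / (K - 1)) * (σ t + 1)) ∧
    ∃ C' > (0:ℝ), ∀ t > (0:ℝ), ∀ j : ℕ, 1 ≤ j →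
        ω (K ^ j * t) ≤ C' * (K ^ r) ^ j * (σ t + 1) := by
  have hK0 : (0:ℝ) < K := lt_trans one_pos hK
  have hK1 : (0:ℝ) < K - 1 := by linarith
  have main : ∀ t > (0:ℝ), ∀ j : ℕ,
      ω (K ^ j * t) / K ^ (r * j) ≤ C * (K ^ (1 + r) / (K - 1)) * (σ t + 1) := by
    intro t ht j
    set a : ℝ := K ^ j with ha
    set b : ℝ := K ^ (j + 1) with hb
    have ha1 : (1:ℝ) ≤ a := one_le_pow₀ hK.le
    have ha0 : (0:ℝ) < a := lt_of_lt_of_le one_pos ha1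
    have hab : a < b := by
      rw [ha, hb, pow_succ]
      nlinarith [pow_pos hK0 j]
    have hb0 : (0:ℝ) < b := lt_trans ha0 hab
    have hsub : Ioc a b ⊆ Ioi (1:ℝ) := fun u hu => lt_of_le_of_lt ha1 hu.1
    have hint' := hint t ht
    have hf0 : 0 ≤ᵐ[volume.restrict (Ioi (1:ℝ))] fun u => ω (t * u) / u ^ (1 + r) := by
      filter_upwards [ae_restrict_mem measurableSet_Ioi] with u hu
      have hu1 : (1:ℝ) < u := hu
      have h1 : (0:ℝ) ≤ ω (t * u) := hpos _ (by positivity)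
      have h2 : (0:ℝ) < u ^ (1 + r) := Real.rpow_pos_of_pos (by linarith) _
      positivity
    -- lower bound by constant on Ioc a b
    have hIab : IntegrableOn (fun u => ω (t * u) / u ^ (1 + r)) (Ioc a b) :=
      hint'.mono_set hsub
    have hconst : ω (t * a) / b ^ (1 + r) * (b - a)
        ≤ ∫ u in Ioc a b, ω (t * u) / u ^ (1 + r) := by
      have hμ : volume (Ioc a b) ≠ ⊤ := by
        rw [Real.volume_Ioc]; exact ENNReal.ofReal_ne_top
      have hle : ∀ u ∈ Ioc a b, ω (t * a) / b ^ (1 + r) ≤ ω (t * u) / u ^ (1 + r) := by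
        intro u hu
        have hu0 : (0:ℝ) < u := lt_trans (lt_of_lt_of_le one_pos ha1) hu.1
        have hωle : ω (t * a) ≤ ω (t * u) := by
          apply hmono (mem_Ici.mpr (by positivity)) (mem_Ici.mpr (by positivity))
          have := hu.1.le
          nlinarith
        have hωpos : (0:ℝ) ≤ ω (t * u) := hpos _ (by positivity)
        have hd0 : (0:ℝ) < u ^ (1 + r) := Real.rpow_pos_of_pos hu0 _
        have hdle : u ^ (1 + r) ≤ b ^ (1 + r) :=
          Real.rpow_le_rpow hu0.le hu.2 (by linarith)
        exact div_le_div₀ hωpos hωle hd0 hdle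
      have := setIntegral_ge_of_const_le measurableSet_Ioc hμ hle hIab
      rw [Real.volume_real_Ioc_of_le hab.le, smul_eq_mul] at this; linarith [this]
    have hmono_int : ∫ u in Ioc a b, ω (t * u) / u ^ (1 + r)
        ≤ ∫ u in Ioi (1:ℝ), ω (t * u) / u ^ (1 + r) :=
      setIntegral_mono_set hint' hf0 (HasSubset.Subset.eventuallyLE hsub)
    have key : ω (t * a) / b ^ (1 + r) * (b - a) ≤ C * (σ t + 1) :=
      le_trans hconst (le_trans hmono_int (hbd t ht))
    -- rewrite powers
    set P : ℝ := K ^ (r * (j:ℝ)) with hP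
    set Q : ℝ := K ^ (1 + r) with hQ
    have hP0 : (0:ℝ) < P := Real.rpow_pos_of_pos hK0 _
    have hQ0 : (0:ℝ) < Q := Real.rpow_pos_of_pos hK0 _
    have hbpow : b ^ (1 + r) = a * P * Q := by
      rw [hb, ← Real.rpow_natCast K (j + 1), ← Real.rpow_mul hK0.le,
        show (((j:ℕ) + 1 : ℕ) : ℝ) * (1 + r) = (j:ℝ) + (r * j + (1 + r)) by
          push_cast; ring,
        Real.rpow_add hK0, Real.rpow_add hK0, Real.rpow_natCast, ha, hP, hQ]
      ring
    have hba : b - a = a * (K - 1) := by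
      rw [hb, ha, pow_succ]; ring
    rw [hbpow, hba] at key
    have h2 : ω (t * a) * (a * (K - 1)) ≤ C * (σ t + 1) * (a * P * Q) := by
      rw [div_mul_eq_mul_div, div_le_iff₀ (by positivity)] at key
      linarith
    have h3 : ω (t * a) * (K - 1) ≤ C * (σ t + 1) * (P * Q) := by
      have : a * (ω (t * a) * (K - 1)) ≤ a * (C * (σ t + 1) * (P * Q)) := by
        calc a * (ω (t * a) * (K - 1)) = ω (t * a) * (a * (K - 1)) := by ring
          _ ≤ C * (σ t + 1) * (a * P * Q) := h2
          _ = a * (C * (σ t + 1) * (P * Q)) := by ring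
      exact le_of_mul_le_mul_left this ha0
    have hcomm : K ^ j * t = t * a := by rw [ha]; ring
    rw [hcomm, div_le_iff₀ hP0,
      show C * (Q / (K - 1)) * (σ t + 1) * P = C * (σ t + 1) * (P * Q) / (K - 1) by
        field_simp,
      le_div_iff₀ hK1]
    exact h3
  refine ⟨main, C * (K ^ (1 + r) / (K - 1)), ?_, ?_⟩
  · exact mul_pos hC (div_pos (Real.rpow_pos_of_pos hK0 _) hK1)
  · intro t ht j hj
    have h := main t ht j
    have hP0 : (0:ℝ) < K ^ (r * (j:ℝ)) := Real.rpow_pos_of_pos hK0 _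
    rw [div_le_iff₀ hP0] at h
    have hpow : K ^ (r * (j:ℝ)) = (K ^ r) ^ j := by
      rw [Real.rpow_mul hK0.le, Real.rpow_natCast]
    calc ω (K ^ j * t) ≤ C * (K ^ (1 + r) / (K - 1)) * (σ t + 1) * K ^ (r * (j:ℝ)) := h
      _ = C * (K ^ (1 + r) / (K - 1)) * (K ^ r) ^ j * (σ t + 1) := by rw [hpow]; ring
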